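/- Consider the stochastic Banach–Picard iteration with zero additive error, x_i^{ℓ+1} = (1 − u_i^ℓ) x_i^ℓ + u_i^ℓ T_i x^ℓ, under the stated stochastic framework, where T is ζ-quasi-contractive with ζ ∈ (0,1) and x* is a fixed point of T. Let ε ∈ (0, p_i]. Then for each coordinate i and every ℓ ∈ ℕ, with probability at least 1 − δ(ε, ℓ): ‖x_i^ℓ − x_i*‖_i ≤ ζ^{ℓ(p_i − ε)} ‖x_i⁰ − x_i*‖_i, where δ(ε, ℓ) := exp(−ℓ D(p_i − ε ‖ p_i)) and D(p_i − ε ‖ p_i) := (p_i − ε) log(1 − ε/p_i) + (1 − p_i + ε) log(1 + ε/(1 − p_i)). -/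

import Mathlib

open MeasureTheory ProbabilityTheory Real

/-- **Stochastic Banach–Picard without additive noise, quasi-contractive case.**
For the iteration `x_i^{ℓ+1} = (1 − u_i^ℓ) x_i^ℓ + u_i^ℓ T_i x^ℓ` with `T` ζ-quasi-contractive
with fixed point `x*`, i.i.d. update indicators with `P(u_i^ℓ = 1) = p_i > 0`, and
`ε ∈ (0, p_i]`, for every coordinate `i` and every `ℓ`, with probability at least
`1 − δ(ε, ℓ)`: `‖x_i^ℓ − x_i*‖ ≤ ζ^{ℓ(p_i − ε)} ‖x_i⁰ − x_i*‖`, where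
`δ(ε, ℓ) = exp(−ℓ D(p_i − ε ‖ p_i))` and
`D(p_i − ε ‖ p_i) = (p_i − ε) log(1 − ε/p_i) + (1 − p_i + ε) log(1 + ε/(1 − p_i))`. -/
theorem stochastic_banach_picard_no_noise_contractive
    {Ω : Type*} [MeasurableSpace Ω] (μ : Measure Ω) [IsProbabilityMeasure μ]
    {n : ℕ} (H : Fin n → Type*)
    [∀ i, NormedAddCommGroup (H i)] [∀ i, InnerProductSpace ℝ (H i)]
    [∀ i, CompleteSpace (H i)] [∀ i, MeasurableSpace (H i)] [∀ i, BorelSpace (H i)]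
    -- the operator: ζ-quasi-contractive with fixed point x*
    (T : (∀ i, H i) → ∀ i, H i) (ζ : ℝ) (hζ : ζ ∈ Set.Ioo (0 : ℝ) 1)
    (hT : ∀ x y : ∀ i, H i, T y = y → ∀ i, ‖T x i - y i‖ ≤ ζ * ‖x i - y i‖)
    (xstar : ∀ i, H i) (hxstar : T xstar = xstar)
    -- the random update indicators: i.i.d., {0,1}-valued, with P(u_i = 1) = p_i > 0
    (u : ℕ → Ω → Fin n → ℝ) (humeas : ∀ ℓ, Measurable (u ℓ))
    (h01 : ∀ ℓ ω i, u ℓ ω i = 0 ∨ u ℓ ω i = 1)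
    (p : Fin n → ℝ) (hp : ∀ i, 0 < p i)
    (hpP : ∀ ℓ i, μ {ω | u ℓ ω i = 1} = ENNReal.ofReal (p i))
    (huindep : iIndepFun u μ)
    (huid : ∀ ℓ ℓ', IdentDistrib (u ℓ) (u ℓ') μ μ)
    -- the iteration with zero additive error, deterministic initial condition x0
    (x0 : ∀ i, H i) (X : ℕ → Ω → ∀ i, H i)
    (hX0 : ∀ ω, X 0 ω = x0)
    (hXrec : ∀ ℓ ω i, X (ℓ + 1) ω i
      = (1 - u ℓ ω i) • X ℓ ω i + u ℓ ω i • T (X ℓ ω) i)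
    (ℓ : ℕ) (i : Fin n) (ε : ℝ) (hε : ε ∈ Set.Ioc (0 : ℝ) (p i)) :
    ENNReal.ofReal (1 - Real.exp (-(ℓ : ℝ) *
        ((p i - ε) * Real.log (1 - ε / p i)
          + (1 - p i + ε) * Real.log (1 + ε / (1 - p i)))))
      ≤ μ {ω | ‖X ℓ ω i - xstar i‖
          ≤ ζ ^ ((ℓ : ℝ) * (p i - ε)) * ‖x0 i - xstar i‖} := by
  obtain ⟨hζ0, hζ1⟩ := hζ
  obtain ⟨hε0, hεp⟩ := hε
  have hpi : 0 < p i := hp i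
  have hc : (0:ℝ) ≤ ‖x0 i - xstar i‖ := norm_nonneg _
  have hp1 : p i ≤ 1 := by
    have h2 : μ {ω | u 0 ω i = 1} ≤ 1 := prob_le_one
    rw [hpP 0 i] at h2
    exact (ENNReal.ofReal_le_one).mp h2
  -- the coordinate sum S
  set S : ℕ → Ω → ℝ := fun L ω => ∑ k ∈ Finset.range L, u k ω i with hSdef
  have hS0 : ∀ L ω, 0 ≤ S L ω := by
    intro L ω
    exact Finset.sum_nonneg fun k _ => by rcases h01 k ω i with h | h <;> simp [h]
  have hSle : ∀ L ω, S L ω ≤ L := by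
    intro L ω
    calc S L ω ≤ ∑ _k ∈ Finset.range L, (1:ℝ) :=
          Finset.sum_le_sum fun k _ => by rcases h01 k ω i with h | h <;> simp [h]
      _ = L := by simp
  -- pointwise bound along trajectories
  have hpt : ∀ L ω, ‖X L ω i - xstar i‖ ≤ ζ ^ (S L ω) * ‖x0 i - xstar i‖ := by
    intro L
    induction L with
    | zero =>
      intro ω
      simp [hSdef, hX0]
    | succ L ih =>
      intro ω
      have hrec := hXrec L ω i
      have hSsucc : S (L + 1) ω = S L ω + u L ω i := Finset.sum_range_succ _ _
      rcases h01 L ω i with h | h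
      · rw [h] at hrec
        simp only [sub_zero, one_smul, zero_smul, add_zero] at hrec
        rw [hSsucc, h, add_zero, hrec]
        exact ih ω
      · rw [h] at hrec
        simp only [sub_self, zero_smul, one_smul, zero_add] at hrec
        rw [hSsucc, h, hrec]
        calc ‖T (X L ω) i - xstar i‖ ≤ ζ * ‖X L ω i - xstar i‖ :=
              hT (X L ω) xstar hxstar i
          _ ≤ ζ * (ζ ^ (S L ω) * ‖x0 i - xstar i‖) :=
              mul_le_mul_of_nonneg_left (ih ω) hζ0.le
          _ = ζ ^ (S L ω + 1) * ‖x0 i - xstar i‖ := by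
              rw [Real.rpow_add hζ0, Real.rpow_one]; ring
  -- event inclusion
  have hsub : {ω | (ℓ:ℝ) * (p i - ε) ≤ S ℓ ω}
      ⊆ {ω | ‖X ℓ ω i - xstar i‖ ≤ ζ ^ ((ℓ:ℝ) * (p i - ε)) * ‖x0 i - xstar i‖} := by
    intro ω hω
    refine le_trans (hpt ℓ ω) ?_
    exact mul_le_mul_of_nonneg_right
      (Real.rpow_le_rpow_of_exponent_ge hζ0 hζ1.le hω) hc
  refine le_trans ?_ (measure_mono hsub)
  -- trivial case ε = p i
  rcases eq_or_lt_of_le hεp with hpe | hpe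
  · have hA : {ω | (ℓ:ℝ) * (p i - ε) ≤ S ℓ ω} = Set.univ := by
      refine Set.eq_univ_of_forall fun ω => ?_
      simp only [Set.mem_setOf_eq, ← hpe, sub_self, mul_zero]
      exact hS0 ℓ ω
    rw [hA, measure_univ]
    exact ENNReal.ofReal_le_one.mpr (sub_le_self 1 (Real.exp_pos _).le)
  -- trivial case p i = 1
  rcases eq_or_lt_of_le hp1 with hp1' | hp1'
  · -- degenerate: p i = 1, D ≤ 0, left side is 0
    have hD0 : (p i - ε) * Real.log (1 - ε / p i)
        + (1 - p i + ε) * Real.log (1 + ε / (1 - p i)) ≤ 0 := by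
      rw [hp1']
      have h1 : (1:ℝ) - 1 = 0 := by ring
      rw [h1, div_zero, add_zero, Real.log_one, mul_zero, add_zero, div_one]
      have hlog : Real.log (1 - ε) < 0 := Real.log_neg (by linarith) (by linarith)
      nlinarith
    have : 1 - Real.exp (-(ℓ:ℝ) * ((p i - ε) * Real.log (1 - ε / p i)
        + (1 - p i + ε) * Real.log (1 + ε / (1 - p i)))) ≤ 0 := by
      have : (0:ℝ) ≤ -(ℓ:ℝ) * ((p i - ε) * Real.log (1 - ε / p i)
          + (1 - p i + ε) * Real.log (1 + ε / (1 - p i))) := by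
        have hl : (0:ℝ) ≤ (ℓ:ℝ) := Nat.cast_nonneg _
        nlinarith
      linarith [Real.one_le_exp this]
    rw [ENNReal.ofReal_eq_zero.mpr this]
    exact zero_le
  -- main case: 0 < ε < p i < 1
  set q : ℝ := p i - ε with hqdef
  have hq0 : 0 < q := by simp only [hqdef]; linarith
  have hq1 : q < 1 := by simp only [hqdef]; linarith
  have h1q : 0 < 1 - q := by linarith
  have h1p : 0 < 1 - p i := by linarith
  have hqp : q < p i := by simp only [hqdef]; linarith
  -- rewrite D
  have hD : (p i - ε) * Real.log (1 - ε / p i)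
      + (1 - p i + ε) * Real.log (1 + ε / (1 - p i))
      = q * (Real.log q - Real.log (p i))
        + (1 - q) * (Real.log (1 - q) - Real.log (1 - p i)) := by
    have e1 : 1 - ε / p i = q / p i := by field_simp [hqdef]; linarith
    have e2 : 1 + ε / (1 - p i) = (1 - q) / (1 - p i) := by
      rw [hqdef]; field_simp; ring
    rw [e1, e2, Real.log_div hq0.ne' hpi.ne', Real.log_div h1q.ne' h1p.ne']
    rw [hqdef]; ring
  rw [hD]
  set Dv : ℝ := q * (Real.log q - Real.log (p i))
      + (1 - q) * (Real.log (1 - q) - Real.log (1 - p i)) with hDv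
  set δ : ℝ := Real.exp (-(ℓ:ℝ) * Dv) with hδ
  -- Chernoff parameter
  set R : ℝ := p i * (1 - q) / ((1 - p i) * q) with hR
  have hR0 : 0 < R := div_pos (mul_pos hpi h1q) (mul_pos h1p hq0)
  have hR1 : 1 < R := by
    rw [hR, lt_div_iff₀ (mul_pos h1p hq0)]
    nlinarith
  set t : ℝ := -Real.log R with htdef
  have ht : t ≤ 0 := neg_nonpos.mpr (Real.log_nonneg hR1.le)
  have hexpt : Real.exp t = ((1 - p i) * q) / (p i * (1 - q)) := by
    rw [htdef, Real.exp_neg, Real.exp_log hR0, hR, inv_div]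
  -- coordinate functions and their properties
  have hfmeas : ∀ k : ℕ, Measurable (fun ω => u k ω i) :=
    fun k => (measurable_pi_apply i).comp (humeas k)
  have hAmeas : ∀ k : ℕ, MeasurableSet {ω | u k ω i = 1} := by
    intro k
    exact (hfmeas k) (measurableSet_singleton 1)
  have hfind : ∀ k : ℕ, (fun ω => u k ω i)
      = Set.indicator {ω | u k ω i = 1} (fun _ => (1:ℝ)) := by
    intro k
    funext ω
    rcases h01 k ω i with h | h
    · rw [h, Set.indicator_of_notMem]
      simp [Set.mem_setOf_eq, h]
    · rw [h, Set.indicator_of_mem]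
      exact h
  have hintf : ∀ k : ℕ, Integrable (fun ω => u k ω i) μ := by
    intro k
    rw [hfind k]
    exact (integrable_const 1).indicator (hAmeas k)
  have hEf : ∀ k : ℕ, ∫ ω, u k ω i ∂μ = p i := by
    intro k
    rw [hfind k, integral_indicator_const (1:ℝ) (hAmeas k), measureReal_def, hpP k i,
      ENNReal.toReal_ofReal hpi.le, smul_eq_mul, mul_one]
  -- mgf of each coordinate
  have hmgfk : ∀ k : ℕ, mgf (fun ω => u k ω i) μ t = 1 - p i + p i * Real.exp t := by
    intro k
    have hptw : (fun ω => Real.exp (t * u k ω i))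
        = fun ω => 1 + (Real.exp t - 1) * u k ω i := by
      funext ω
      rcases h01 k ω i with h | h <;> rw [h] <;> simp
    simp only [mgf]
    rw [hptw, integral_add (integrable_const 1) ((hintf k).const_mul _),
      integral_const, integral_const_mul, hEf k]
    simp only [measureReal_def, measure_univ, ENNReal.toReal_one, smul_eq_mul, one_mul]
    ring
  -- measurability and integrability for the sum
  have hSmeas : Measurable (S ℓ) :=
    Finset.measurable_sum _ fun k _ => hfmeas k
  have hint : Integrable (fun ω => Real.exp (t * S ℓ ω)) μ := by
    refine Integrable.mono' (integrable_const (Real.exp (|t| * ℓ)))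
      ((hSmeas.const_mul t).exp.aestronglyMeasurable) (ae_of_all _ fun ω => ?_)
    rw [Real.norm_eq_abs, abs_of_pos (Real.exp_pos _), Real.exp_le_exp]
    calc t * S ℓ ω ≤ |t| * S ℓ ω := mul_le_mul_of_nonneg_right (le_abs_self t) (hS0 ℓ ω)
      _ ≤ |t| * ℓ := mul_le_mul_of_nonneg_left (hSle ℓ ω) (abs_nonneg t)
  -- independence of the coordinates
  have hindep' : iIndepFun
      (fun k => fun ω => u k ω i) μ :=
    huindep.comp (fun _ v => v i) (fun _ => measurable_pi_apply i)
  -- mgf of the sum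
  have hSeq : S ℓ = ∑ k ∈ Finset.range ℓ, (fun ω => u k ω i) := by
    funext ω
    simp [hSdef]
  have hmgfS : mgf (S ℓ) μ t = (1 - p i + p i * Real.exp t) ^ ℓ := by
    rw [hSeq, hindep'.mgf_sum (fun k => hfmeas k),
      Finset.prod_congr rfl (fun k _ => hmgfk k), Finset.prod_const, Finset.card_range]
  -- Chernoff bound
  have hch := measure_le_le_exp_mul_mgf (μ := μ) (X := S ℓ) (t := t)
    ((ℓ:ℝ) * q) ht hint
  rw [hmgfS] at hch
  -- compute m
  have hm : 1 - p i + p i * Real.exp t = (1 - p i) / (1 - q) := by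
    rw [hexpt]
    field_simp
    ring
  have hm0 : 0 < 1 - p i + p i * Real.exp t := by
    rw [hm]; positivity
  -- identify the bound with δ
  have hlogR : Real.log R = Real.log (p i) + Real.log (1 - q)
      - (Real.log (1 - p i) + Real.log q) := by
    rw [hR, Real.log_div (mul_pos hpi h1q).ne' (mul_pos h1p hq0).ne',
      Real.log_mul hpi.ne' h1q.ne', Real.log_mul h1p.ne' hq0.ne']
  have hlogm : Real.log (1 - p i + p i * Real.exp t)
      = Real.log (1 - p i) - Real.log (1 - q) := by
    rw [hm, Real.log_div h1p.ne' h1q.ne']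
  have hkey : Real.exp (-t * ((ℓ:ℝ) * q)) * (1 - p i + p i * Real.exp t) ^ ℓ = δ := by
    have hpow : (1 - p i + p i * Real.exp t) ^ ℓ
        = Real.exp ((ℓ:ℝ) * Real.log (1 - p i + p i * Real.exp t)) := by
      rw [Real.exp_nat_mul, Real.exp_log hm0]
    rw [hpow, ← Real.exp_add, hδ]
    congr 1
    rw [hlogm, show -t = Real.log R from by rw [htdef, neg_neg], hlogR, hDv]
    ring
  rw [hkey] at hch
  -- assemble the final bound
  have hBδ : μ {ω | S ℓ ω ≤ (ℓ:ℝ) * q} ≤ ENNReal.ofReal δ :=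
    (ENNReal.le_ofReal_iff_toReal_le (measure_ne_top μ _) (Real.exp_pos _).le).mpr hch
  have hunion : (1:ENNReal) ≤ μ {ω | (ℓ:ℝ) * q ≤ S ℓ ω} + μ {ω | S ℓ ω ≤ (ℓ:ℝ) * q} := by
    have huniv : {ω | (ℓ:ℝ) * q ≤ S ℓ ω} ∪ {ω | S ℓ ω ≤ (ℓ:ℝ) * q} = Set.univ := by
      refine Set.eq_univ_of_forall fun ω => ?_
      rcases le_total ((ℓ:ℝ) * q) (S ℓ ω) with h | h
      · exact Or.inl h
      · exact Or.inr h
    calc (1:ENNReal) = μ ({ω | (ℓ:ℝ) * q ≤ S ℓ ω} ∪ {ω | S ℓ ω ≤ (ℓ:ℝ) * q}) := by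
          rw [huniv, measure_univ]
      _ ≤ _ := measure_union_le _ _
  calc ENNReal.ofReal (1 - δ) = 1 - ENNReal.ofReal δ := by
        rw [ENNReal.ofReal_sub 1 (Real.exp_pos _).le, ENNReal.ofReal_one]
    _ ≤ μ {ω | (ℓ:ℝ) * q ≤ S ℓ ω} := by
        rw [tsub_le_iff_right]
        exact le_trans hunion (add_le_add_right hBδ _)
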